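/- Let A, B, C, D ∈ ℝ² be four pairwise distinct points and k_A, k_B, k_C, k_D four nonzero real numbers. Assume Condition (i): no three of the points A, B, C, D are collinear; and Condition (ii): there is no point P ∈ ℝ² and no three distinct points T among A, B, C, D with k_T‖P−T‖² = 1 for all three. Then the set of real solutions of System (*) is finite. -/

import Mathlib

/-- The squared Euclidean "norm" on `ℝ²`: sum of squares of the coordinates. -/
def sq2 (u : ℝ × ℝ) : ℝ := u.1 ^ 2 + u.2 ^ 2

/-- `(X, Y) ∈ ℝ² × ℝ²` is a real solution of System (*) for the configuration
`A, B, C, D` with constants `kA, kB, kC, kD`. -/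
def IsRealSol (A B C D : ℝ × ℝ) (kA kB kC kD : ℝ) (X Y : ℝ × ℝ) : Prop :=
  (X ≠ A ∧ X ≠ B ∧ X ≠ C ∧ X ≠ D) ∧
  (Y ≠ A ∧ Y ≠ B ∧ Y ≠ C ∧ Y ≠ D) ∧
  1 / sq2 (X - A) + 1 / sq2 (Y - A) = kA ∧
  1 / sq2 (X - B) + 1 / sq2 (Y - B) = kB ∧
  1 / sq2 (X - C) + 1 / sq2 (Y - C) = kC ∧
  1 / sq2 (X - D) + 1 / sq2 (Y - D) = kD

set_option synthInstance.maxHeartbeats 1000000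
set_option maxHeartbeats 1600000

namespace FMRS


lemma sq2_ne_zero {P Q : ℝ × ℝ} (h : P ≠ Q) : sq2 (P - Q) ≠ 0 := by
  have h1 : P.1 ≠ Q.1 ∨ P.2 ≠ Q.2 := by
    by_contra hc
    push_neg at hc
    exact h (Prod.ext hc.1 hc.2)
  have : (0:ℝ) < sq2 (P - Q) := by
    rcases h1 with h1 | h1
    · have : (0:ℝ) < (P.1 - Q.1)^2 := pow_two_pos_of_ne_zero (sub_ne_zero.mpr h1)
      simp only [sq2, Prod.fst_sub, Prod.snd_sub]
      nlinarith [sq_nonneg (P.2 - Q.2)]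
    · have : (0:ℝ) < (P.2 - Q.2)^2 := pow_two_pos_of_ne_zero (sub_ne_zero.mpr h1)
      simp only [sq2, Prod.fst_sub, Prod.snd_sub]
      nlinarith [sq_nonneg (P.1 - Q.1)]
  exact ne_of_gt this

lemma det_ne_zero_of_not_collinear {T1 T2 T3 : ℝ × ℝ}
    (h : ¬ Collinear ℝ ({T1, T2, T3} : Set (ℝ × ℝ))) :
    (T2.1 - T1.1) * (T3.2 - T1.2) - (T2.2 - T1.2) * (T3.1 - T1.1) ≠ 0 := by
  intro hdet
  apply h
  have hmem : T1 ∈ ({T1, T2, T3} : Set (ℝ × ℝ)) := by simp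
  rw [collinear_iff_of_mem hmem]
  by_cases hd0 : T2 - T1 = (0 : ℝ × ℝ)
  · refine ⟨T3 - T1, ?_⟩
    intro p hp
    simp only [Set.mem_insert_iff, Set.mem_singleton_iff] at hp
    rcases hp with hp | hp | hp
    · exact ⟨0, by simp [hp]⟩
    · refine ⟨0, ?_⟩
      have h21 : T2 = T1 := by rwa [sub_eq_zero] at hd0
      simp [hp, h21]
    · exact ⟨1, by simp [hp]⟩
  · refine ⟨T2 - T1, ?_⟩
    intro p hp
    simp only [Set.mem_insert_iff, Set.mem_singleton_iff] at hp
    rcases hp with hp | hp | hp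
    · exact ⟨0, by simp [hp]⟩
    · exact ⟨1, by simp [hp]⟩
    · rw [hp]
      by_cases hd1 : T2.1 - T1.1 ≠ 0
      · refine ⟨(T3.1 - T1.1) / (T2.1 - T1.1), ?_⟩
        have h2 : T3.2 - T1.2 = (T3.1 - T1.1) / (T2.1 - T1.1) * (T2.2 - T1.2) := by
          field_simp
          nlinarith [hdet]
        apply Prod.ext
        · simp only [Prod.fst_vadd, Prod.smul_fst, Prod.fst_sub, smul_eq_mul, vadd_eq_add, Prod.fst_add]
          field_simp
          ring
        · simp only [Prod.snd_vadd, Prod.smul_snd, Prod.snd_sub, smul_eq_mul, vadd_eq_add, Prod.snd_add]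
          linarith [h2]
      · push_neg at hd1
        have hd2 : T2.2 - T1.2 ≠ 0 := by
          intro h2
          exact hd0 (by apply Prod.ext <;> simp [Prod.fst_sub, Prod.snd_sub, hd1, h2])
        have he1 : T3.1 - T1.1 = 0 := by
          have : (T2.2 - T1.2) * (T3.1 - T1.1) = 0 := by
            linear_combination (T3.2 - T1.2) * hd1 - hdet
          rcases mul_eq_zero.mp this with h' | h'
          · exact absurd h' hd2
          · exact h'
        refine ⟨(T3.2 - T1.2) / (T2.2 - T1.2), ?_⟩
        apply Prod.ext
        · simp only [Prod.fst_vadd, Prod.smul_fst, Prod.fst_sub, smul_eq_mul, vadd_eq_add, Prod.fst_add]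
          rw [hd1]
          linarith [he1]
        · simp only [Prod.snd_vadd, Prod.smul_snd, Prod.snd_sub, smul_eq_mul, vadd_eq_add, Prod.snd_add]
          field_simp
          ring



lemma exists_real_center {k : Type*} [Field k] (ρ : ℝ →+* k)
    {T1 T2 T3 : ℝ × ℝ} {c1 c2 c3 : ℝ}
    (hdet : (T2.1 - T1.1) * (T3.2 - T1.2) - (T2.2 - T1.2) * (T3.1 - T1.1) ≠ 0)
    {y1 y2 : k}
    (h1 : (y1 - ρ T1.1)^2 + (y2 - ρ T1.2)^2 = ρ c1)
    (h2 : (y1 - ρ T2.1)^2 + (y2 - ρ T2.2)^2 = ρ c2)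
    (h3 : (y1 - ρ T3.1)^2 + (y2 - ρ T3.2)^2 = ρ c3) :
    ∃ P : ℝ × ℝ, sq2 (P - T1) = c1 ∧ sq2 (P - T2) = c2 ∧ sq2 (P - T3) = c3 := by
  have hinj : Function.Injective ρ := ρ.injective
  set d := (T2.1 - T1.1) * (T3.2 - T1.2) - (T2.2 - T1.2) * (T3.1 - T1.1) with hd
  set b1 : ℝ := c1 - c2 + T2.1^2 + T2.2^2 - T1.1^2 - T1.2^2 with hb1
  set b2 : ℝ := c1 - c3 + T3.1^2 + T3.2^2 - T1.1^2 - T1.2^2 with hb2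
  set p1 : ℝ := (b1 * (T3.2 - T1.2) - b2 * (T2.2 - T1.2)) / (2 * d) with hp1
  set p2 : ℝ := ((T2.1 - T1.1) * b2 - (T3.1 - T1.1) * b1) / (2 * d) with hp2
  -- real linear identities
  have r1 : 2 * (T2.1 - T1.1) * p1 + 2 * (T2.2 - T1.2) * p2 = b1 := by
    rw [hp1, hp2]; field_simp; ring
  have r2 : 2 * (T3.1 - T1.1) * p1 + 2 * (T3.2 - T1.2) * p2 = b2 := by
    rw [hp1, hp2]; field_simp; ring
  -- k-side linear identities for y
  have e1 : 2 * (ρ T2.1 - ρ T1.1) * y1 + 2 * (ρ T2.2 - ρ T1.2) * y2 = ρ b1 := by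
    have : ρ b1 = ρ c1 - ρ c2 + (ρ T2.1)^2 + (ρ T2.2)^2 - (ρ T1.1)^2 - (ρ T1.2)^2 := by
      rw [hb1]; push_cast [map_sub, map_add, map_pow]; ring
    rw [this]; linear_combination h1 - h2
  have e2 : 2 * (ρ T3.1 - ρ T1.1) * y1 + 2 * (ρ T3.2 - ρ T1.2) * y2 = ρ b2 := by
    have : ρ b2 = ρ c1 - ρ c3 + (ρ T3.1)^2 + (ρ T3.2)^2 - (ρ T1.1)^2 - (ρ T1.2)^2 := by
      rw [hb2]; push_cast [map_sub, map_add, map_pow]; ring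
    rw [this]; linear_combination h1 - h3
  -- k-side linear identities for ρ p
  have f1 : 2 * (ρ T2.1 - ρ T1.1) * ρ p1 + 2 * (ρ T2.2 - ρ T1.2) * ρ p2 = ρ b1 := by
    have := congrArg ρ r1
    push_cast [map_add, map_mul, map_sub, map_ofNat] at this
    exact this
  have f2 : 2 * (ρ T3.1 - ρ T1.1) * ρ p1 + 2 * (ρ T3.2 - ρ T1.2) * ρ p2 = ρ b2 := by
    have := congrArg ρ r2
    push_cast [map_add, map_mul, map_sub, map_ofNat] at this
    exact this
  have hρd : ρ d ≠ 0 := fun h0 => hdet (hinj (by rwa [map_zero]))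
  have hρdx : ρ d = (ρ T2.1 - ρ T1.1) * (ρ T3.2 - ρ T1.2) - (ρ T2.2 - ρ T1.2) * (ρ T3.1 - ρ T1.1) := by
    rw [hd]; push_cast [map_sub, map_mul]; ring
  have hy1 : y1 = ρ p1 := by
    have key : (y1 - ρ p1) * (4 * ρ d) = 0 := by
      rw [hρdx]
      linear_combination (2 * (ρ T3.2 - ρ T1.2)) * e1 - (2 * (ρ T2.2 - ρ T1.2)) * e2
        - (2 * (ρ T3.2 - ρ T1.2)) * f1 + (2 * (ρ T2.2 - ρ T1.2)) * f2
    have h4 : (4 : k) ≠ 0 := by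
      have h4' : (4 : k) = ρ 4 := by rw [map_ofNat]
      rw [h4']
      exact fun h0 => (by norm_num : (4:ℝ) ≠ 0) (hinj (by rwa [map_zero]))
    rcases mul_eq_zero.mp key with h0 | h0
    · exact sub_eq_zero.mp h0
    · exact absurd h0 (mul_ne_zero h4 hρd)
  have hy2 : y2 = ρ p2 := by
    have h4 : (4 : k) ≠ 0 := by
      have h4' : (4 : k) = ρ 4 := by rw [map_ofNat]
      rw [h4']
      exact fun h0 => (by norm_num : (4:ℝ) ≠ 0) (hinj (by rwa [map_zero]))
    have key : (y2 - ρ p2) * (4 * ρ d) = 0 := by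
      rw [hρdx]
      linear_combination (2 * (ρ T2.1 - ρ T1.1)) * e2 - (2 * (ρ T3.1 - ρ T1.1)) * e1
        - (2 * (ρ T2.1 - ρ T1.1)) * f2 + (2 * (ρ T3.1 - ρ T1.1)) * f1
    rcases mul_eq_zero.mp key with h0 | h0
    · exact sub_eq_zero.mp h0
    · exact absurd h0 (mul_ne_zero h4 hρd)
  refine ⟨(p1, p2), ?_, ?_, ?_⟩
  · apply hinj
    have : (ρ p1 - ρ T1.1) ^ 2 + (ρ p2 - ρ T1.2) ^ 2 = ρ c1 := by
      rw [← hy1, ← hy2]; exact h1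
    rw [← this]
    simp only [sq2, Prod.fst_sub, Prod.snd_sub]
    push_cast [map_add, map_sub, map_pow]
    ring
  · apply hinj
    have : (ρ p1 - ρ T2.1) ^ 2 + (ρ p2 - ρ T2.2) ^ 2 = ρ c2 := by
      rw [← hy1, ← hy2]; exact h2
    rw [← this]
    simp only [sq2, Prod.fst_sub, Prod.snd_sub]
    push_cast [map_add, map_sub, map_pow]
    ring
  · apply hinj
    have : (ρ p1 - ρ T3.1) ^ 2 + (ρ p2 - ρ T3.2) ^ 2 = ρ c3 := by
      rw [← hy1, ← hy2]; exact h3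
    rw [← this]
    simp only [sq2, Prod.fst_sub, Prod.snd_sub]
    push_cast [map_add, map_sub, map_pow]
    ring



section Valued

variable {K : Type*} [Field K] {Γ : Type*} [LinearOrderedCommGroupWithZero Γ]

/-- the "circle polynomial" value -/
def circ (φ : ℝ →+* K) (x1 x2 : K) (T : ℝ × ℝ) : K :=
  (x1 - φ T.1)^2 + (x2 - φ T.2)^2

variable (v : Valuation K Γ) (φ : ℝ →+* K)

lemma vφ_le_one (hφ : ∀ r : ℝ, r ≠ 0 → v (φ r) = 1) (r : ℝ) : v (φ r) ≤ 1 := by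
  by_cases hr : r = 0
  · simp [hr]
  · exact le_of_eq (hφ r hr)

lemma one_lt_sq {a : Γ} (ha : 1 < a) : 1 < a * a :=
  lt_of_lt_of_le ha (by calc a = a * 1 := (mul_one a).symm
                          _ ≤ a * a := mul_le_mul_right (le_of_lt ha) a)

lemma lt_sq {a : Γ} (ha : 1 < a) : a < a * a := by
  have h0 : a ≠ 0 := ne_of_gt (lt_trans zero_lt_one ha)
  calc a = a * 1 := (mul_one a).symm
    _ < a * a := mul_lt_mul_of_pos_left ha (zero_lt_iff.mpr h0)


lemma not_two_small (hφ : ∀ r : ℝ, r ≠ 0 → v (φ r) = 1)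
    (x1 x2 : K) (hm : 1 < max (v x1) (v x2))
    {T S : ℝ × ℝ} (hTS : T ≠ S)
    (hT : v (circ φ x1 x2 T) ≤ 1) (hS : v (circ φ x1 x2 S) ≤ 1) : False := by
  have hφ' := vφ_le_one v φ hφ
  set e1 : ℝ := S.1 - T.1 with he1
  set e2 : ℝ := S.2 - T.2 with he2
  have hn : e1^2 + e2^2 ≠ 0 := by
    intro h0
    apply hTS
    have h1 : e1 = 0 := by nlinarith [sq_nonneg e1, sq_nonneg e2]
    have h2 : e2 = 0 := by nlinarith [sq_nonneg e1, sq_nonneg e2]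
    rw [he1, sub_eq_zero] at h1
    rw [he2, sub_eq_zero] at h2
    exact Prod.ext h1.symm h2.symm
  set w : K := x1 * φ e1 + x2 * φ e2 with hw
  set B : K := x2 * φ e1 - x1 * φ e2 with hB
  -- step 1 : v w ≤ 1
  have key1 : φ 2 * w = (circ φ x1 x2 T - circ φ x1 x2 S) - φ (T.1^2 + T.2^2 - S.1^2 - S.2^2) := by
    simp only [hw, he1, he2, circ, map_sub, map_add, map_pow, map_ofNat]
    ring
  have hvw : v w ≤ 1 := by
    have h2 : v (φ 2) = 1 := hφ 2 (by norm_num)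
    have : v (φ 2 * w) ≤ 1 := by
      rw [key1]
      refine le_trans (v.map_sub _ _) (max_le (le_trans (v.map_sub _ _) (max_le hT hS)) (hφ' _))
    rwa [v.map_mul, h2, one_mul] at this
  -- step 2 : v B is large
  have hvn : v (φ (e1^2+e2^2)) = 1 := hφ _ hn
  have idx1 : x1 * φ (e1^2+e2^2) = w * φ e1 - B * φ e2 := by
    simp only [hw, hB, map_add, map_pow]; ring
  have idx2 : x2 * φ (e1^2+e2^2) = w * φ e2 + B * φ e1 := by
    simp only [hw, hB, map_add, map_pow]; ring
  have hx1B : v x1 ≤ max 1 (v B) := by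
    have : v (x1 * φ (e1^2+e2^2)) ≤ max 1 (v B) := by
      rw [idx1]
      refine le_trans (v.map_sub _ _) (max_le ?_ ?_)
      · exact le_max_of_le_left (by
          rw [v.map_mul]
          exact mul_le_one' hvw (hφ' _))
      · exact le_max_of_le_right (by
          rw [v.map_mul]
          calc v B * v (φ e2) ≤ v B * 1 := mul_le_mul_right (hφ' _) _
            _ = v B := mul_one _)
    rwa [v.map_mul, hvn, mul_one] at this
  have hx2B : v x2 ≤ max 1 (v B) := by
    have : v (x2 * φ (e1^2+e2^2)) ≤ max 1 (v B) := by
      rw [idx2]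
      refine le_trans (v.map_add _ _) (max_le ?_ ?_)
      · exact le_max_of_le_left (by
          rw [v.map_mul]
          exact mul_le_one' hvw (hφ' _))
      · exact le_max_of_le_right (by
          rw [v.map_mul]
          calc v B * v (φ e1) ≤ v B * 1 := mul_le_mul_right (hφ' _) _
            _ = v B := mul_one _)
    rwa [v.map_mul, hvn, mul_one] at this
  have hB1 : 1 < v B := by
    by_contra hc
    push_neg at hc
    have h1 : max 1 (v B) ≤ 1 := max_le le_rfl hc
    have : max (v x1) (v x2) ≤ 1 := max_le (le_trans hx1B h1) (le_trans hx2B h1)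
    exact absurd hm (not_lt_of_ge this)
  have hx1 : v x1 ≤ v B := le_trans hx1B (max_le (le_of_lt hB1) le_rfl)
  have hx2 : v x2 ≤ v B := le_trans hx2B (max_le (le_of_lt hB1) le_rfl)
  -- step 3 : main identity
  have idcirc : circ φ x1 x2 T * φ (e1^2+e2^2) =
      B^2 + (w^2 + (φ (T.1^2+T.2^2) - φ 2 * (x1 * φ T.1 + x2 * φ T.2)) * φ (e1^2+e2^2)) := by
    simp only [hw, hB, circ, map_add, map_pow, map_sub, map_mul, map_ofNat]
    ring
  have hBB : 1 < v (B^2) := by rw [pow_two, v.map_mul]; exact one_lt_sq (hB1)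
  have hrest : v (w^2 + (φ (T.1^2+T.2^2) - φ 2 * (x1 * φ T.1 + x2 * φ T.2)) * φ (e1^2+e2^2)) < v (B^2) := by
    rw [pow_two B, v.map_mul]
    refine lt_of_le_of_lt (v.map_add _ _) (max_lt ?_ ?_)
    · calc v (w^2) = v w * v w := by rw [pow_two, v.map_mul]
        _ ≤ 1 := mul_le_one' hvw hvw
        _ < v B * v B := one_lt_sq hB1
    · rw [v.map_mul, hvn, mul_one]
      refine lt_of_le_of_lt (v.map_sub _ _) (max_lt ?_ ?_)
      · exact lt_of_le_of_lt (hφ' _) (one_lt_sq hB1)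
      · rw [v.map_mul, hφ 2 (by norm_num), one_mul]
        refine lt_of_le_of_lt (v.map_add _ _) (max_lt ?_ ?_)
        · rw [v.map_mul]
          calc v x1 * v (φ T.1) ≤ v x1 * 1 := mul_le_mul_right (hφ' _) _
            _ = v x1 := mul_one _
            _ ≤ v B := hx1
            _ < v B * v B := lt_sq hB1
        · rw [v.map_mul]
          calc v x2 * v (φ T.2) ≤ v x2 * 1 := mul_le_mul_right (hφ' _) _
            _ = v x2 := mul_one _
            _ ≤ v B := hx2
            _ < v B * v B := lt_sq hB1
  have : v (circ φ x1 x2 T * φ (e1^2+e2^2)) = v (B^2) := by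
    rw [idcirc, v.map_add_of_distinct_val (ne_of_lt hrest).symm]
    exact max_eq_left (le_of_lt hrest)
  rw [v.map_mul, hvn, mul_one] at this
  rw [← this] at hBB
  exact absurd hT (not_le.mpr hBB)

lemma v_near (hφ : ∀ r : ℝ, r ≠ 0 → v (φ r) = 1) {k : ℝ} (hk : k ≠ 0) {u w : K} (hu : u ≠ 0)
    (heq : u + w = φ k * u * w) (hvu : 1 < v u) :
    v (w - φ (1/k)) < 1 ∧ v w = 1 := by
  have hvu0 : v u ≠ 0 := ne_of_gt (lt_trans zero_lt_one hvu)
  have hd : v (φ k * u - 1) = v u := by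
    have h1 : v (1 : K) < v (φ k * u) := by
      rw [v.map_mul, hφ k hk, one_mul, v.map_one]
      exact hvu
    rw [v.map_sub_eq_of_lt_left h1, v.map_mul, hφ k hk, one_mul]
  have hd0 : φ k * u - 1 ≠ 0 := by
    intro h0
    rw [h0, v.map_zero] at hd
    exact hvu0 hd.symm
  have hwu : w * (φ k * u - 1) = u := by linear_combination -heq
  have hvw : v w = 1 := by
    have hmul : v w * v u = v u := by
      rw [← hd, ← v.map_mul, hwu, hd]
    have := mul_right_cancel₀ hvu0 (by rw [hmul, one_mul] : v w * v u = 1 * v u)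
    exact this
  have h1 : φ (1/k) * φ k = 1 := by
    rw [← map_mul, one_div, inv_mul_cancel₀ hk, map_one]
  have key : (w - φ (1/k)) * (φ k * u - 1) = φ (1/k) := by
    linear_combination hwu - u * h1
  have hvq : v (φ (1/k)) = 1 := hφ _ (by simp [hk])
  have hmain : v (w - φ (1/k)) * v u = 1 := by
    rw [← hd, ← v.map_mul, key, hvq]
  constructor
  · by_contra hc
    push_neg at hc
    have : (1:Γ) < 1 := by
      calc (1:Γ) < v u := hvu
        _ = 1 * v u := (one_mul _).symm
        _ ≤ v (w - φ (1/k)) * v u := mul_le_mul_left hc _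
        _ = 1 := hmain
    exact lt_irrefl _ this
  · exact hvw

end Valued


section Endgame

variable {K : Type*} [Field K] (V : ValuationSubring K) (φ : ℝ →+* K)

lemma triple_case
    (hφ : ∀ r : ℝ, r ≠ 0 → V.valuation (φ r) = 1)
    {T1 T2 T3 : ℝ × ℝ} {k1 k2 k3 : ℝ}
    (hk1 : k1 ≠ 0) (hk2 : k2 ≠ 0) (hk3 : k3 ≠ 0)
    (h12 : T1 ≠ T2)
    (hdet : (T2.1 - T1.1) * (T3.2 - T1.2) - (T2.2 - T1.2) * (T3.1 - T1.1) ≠ 0)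
    (x1 x2 y1 y2 : K)
    (hu1 : circ φ x1 x2 T1 ≠ 0) (hu2 : circ φ x1 x2 T2 ≠ 0) (hu3 : circ φ x1 x2 T3 ≠ 0)
    (he1 : circ φ x1 x2 T1 + circ φ y1 y2 T1 = φ k1 * circ φ x1 x2 T1 * circ φ y1 y2 T1)
    (he2 : circ φ x1 x2 T2 + circ φ y1 y2 T2 = φ k2 * circ φ x1 x2 T2 * circ φ y1 y2 T2)
    (he3 : circ φ x1 x2 T3 + circ φ y1 y2 T3 = φ k3 * circ φ x1 x2 T3 * circ φ y1 y2 T3)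
    (hp1 : 1 < V.valuation (circ φ x1 x2 T1))
    (hp2 : 1 < V.valuation (circ φ x1 x2 T2))
    (hp3 : 1 < V.valuation (circ φ x1 x2 T3)) :
    ∃ P : ℝ × ℝ, sq2 (P - T1) = 1/k1 ∧ sq2 (P - T2) = 1/k2 ∧ sq2 (P - T3) = 1/k3 := by
  set v := V.valuation with hv
  have hw1 := v_near v φ hφ hk1 hu1 he1 hp1
  have hw2 := v_near v φ hφ hk2 hu2 he2 hp2
  have hw3 := v_near v φ hφ hk3 hu3 he3 hp3
  -- y is bounded
  have hy1 : v y1 ≤ 1 := by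
    by_contra hc
    push_neg at hc
    exact not_two_small v φ hφ y1 y2 (lt_of_lt_of_le hc (le_max_left _ _)) h12
      (le_of_eq hw1.2) (le_of_eq hw2.2)
  have hy2 : v y2 ≤ 1 := by
    by_contra hc
    push_neg at hc
    exact not_two_small v φ hφ y1 y2 (lt_of_lt_of_le hc (le_max_right _ _)) h12
      (le_of_eq hw1.2) (le_of_eq hw2.2)
  -- move to the valuation subring and its residue field
  have hφmem : ∀ r : ℝ, φ r ∈ V.toSubring := fun r =>
    (V.valuation_le_one_iff (φ r)).1 (vφ_le_one v φ hφ r)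
  set φh : ℝ →+* V := φ.codRestrict V.toSubring hφmem with hφh
  set res : V →+* IsLocalRing.ResidueField V := IsLocalRing.residue V with hres
  set ρ : ℝ →+* IsLocalRing.ResidueField V := res.comp φh with hρ
  set Y1 : V := ⟨y1, (V.valuation_le_one_iff y1).1 hy1⟩ with hY1
  set Y2 : V := ⟨y2, (V.valuation_le_one_iff y2).1 hy2⟩ with hY2
  have main : ∀ (T : ℝ × ℝ) (kk : ℝ), kk ≠ 0 →
      v (circ φ y1 y2 T - φ (1/kk)) < 1 →
      (res Y1 - ρ T.1)^2 + (res Y2 - ρ T.2)^2 = ρ (1/kk) := by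
    intro T kk hkk hvlt
    set c : V := (Y1 - φh T.1)^2 + (Y2 - φh T.2)^2 with hc
    have hcoe : ((c - φh (1/kk) : V) : K) = circ φ y1 y2 T - φ (1/kk) := by
      push_cast [hc, circ]
      rfl
    have hmem : c - φh (1/kk) ∈ IsLocalRing.maximalIdeal V := by
      rw [ValuationSubring.valuation_lt_one_iff]
      rw [hcoe]
      exact hvlt
    have hres0 : res (c - φh (1/kk)) = 0 := Ideal.Quotient.eq_zero_iff_mem.mpr hmem
    have : res c = ρ (1/kk) := by
      rw [map_sub] at hres0
      rw [hρ, RingHom.comp_apply]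
      exact sub_eq_zero.mp hres0
    rw [← this, hc]
    push_cast [map_add, map_sub, map_pow]
    rw [hρ]
    simp [RingHom.comp_apply]
  have h1 := main T1 k1 hk1 hw1.1
  have h2 := main T2 k2 hk2 hw2.1
  have h3 := main T3 k3 hk3 hw3.1
  exact exists_real_center ρ hdet h1 h2 h3

lemma endgame
    (hφ : ∀ r : ℝ, r ≠ 0 → V.valuation (φ r) = 1)
    (A B C D : ℝ × ℝ) (kA kB kC kD : ℝ)
    (hkA : kA ≠ 0) (hkB : kB ≠ 0) (hkC : kC ≠ 0) (hkD : kD ≠ 0)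
    (hAB : A ≠ B) (hAC : A ≠ C) (hAD : A ≠ D)
    (hBC : B ≠ C) (hBD : B ≠ D) (hCD : C ≠ D)
    (hi1 : ¬ Collinear ℝ ({A, B, C} : Set (ℝ × ℝ)))
    (hi2 : ¬ Collinear ℝ ({A, B, D} : Set (ℝ × ℝ)))
    (hi3 : ¬ Collinear ℝ ({A, C, D} : Set (ℝ × ℝ)))
    (hi4 : ¬ Collinear ℝ ({B, C, D} : Set (ℝ × ℝ)))
    (x1 x2 y1 y2 : K)
    (huA : circ φ x1 x2 A ≠ 0) (huB : circ φ x1 x2 B ≠ 0)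
    (huC : circ φ x1 x2 C ≠ 0) (huD : circ φ x1 x2 D ≠ 0)
    (heA : circ φ x1 x2 A + circ φ y1 y2 A = φ kA * circ φ x1 x2 A * circ φ y1 y2 A)
    (heB : circ φ x1 x2 B + circ φ y1 y2 B = φ kB * circ φ x1 x2 B * circ φ y1 y2 B)
    (heC : circ φ x1 x2 C + circ φ y1 y2 C = φ kC * circ φ x1 x2 C * circ φ y1 y2 C)
    (heD : circ φ x1 x2 D + circ φ y1 y2 D = φ kD * circ φ x1 x2 D * circ φ y1 y2 D)
    (hm : 1 < max (V.valuation x1) (V.valuation x2)) :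
    ∃ P : ℝ × ℝ,
      (kA * sq2 (P - A) = 1 ∧ kB * sq2 (P - B) = 1 ∧ kC * sq2 (P - C) = 1) ∨
      (kA * sq2 (P - A) = 1 ∧ kB * sq2 (P - B) = 1 ∧ kD * sq2 (P - D) = 1) ∨
      (kA * sq2 (P - A) = 1 ∧ kC * sq2 (P - C) = 1 ∧ kD * sq2 (P - D) = 1) ∨
      (kB * sq2 (P - B) = 1 ∧ kC * sq2 (P - C) = 1 ∧ kD * sq2 (P - D) = 1) := by
  set v := V.valuation with hv
  have pair : ∀ {T S : ℝ × ℝ}, T ≠ S → ¬ 1 < v (circ φ x1 x2 T) → ¬ 1 < v (circ φ x1 x2 S) → False := by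
    intro T S hTS hT hS
    push_neg at hT hS
    exact not_two_small v φ hφ x1 x2 hm hTS hT hS
  have conv : ∀ (kk : ℝ) (P T : ℝ × ℝ), kk ≠ 0 → sq2 (P - T) = 1/kk → kk * sq2 (P - T) = 1 := by
    intro kk P T hkk hs
    rw [hs]
    field_simp
  by_cases pA : 1 < v (circ φ x1 x2 A)
  · by_cases pB : 1 < v (circ φ x1 x2 B)
    · by_cases pC : 1 < v (circ φ x1 x2 C)
      · obtain ⟨P, hP1, hP2, hP3⟩ := triple_case V φ hφ hkA hkB hkC hAB
          (det_ne_zero_of_not_collinear hi1) x1 x2 y1 y2 huA huB huC heA heB heC pA pB pC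
        exact ⟨P, Or.inl ⟨conv kA P A hkA hP1, conv kB P B hkB hP2, conv kC P C hkC hP3⟩⟩
      · have pD : 1 < v (circ φ x1 x2 D) := by
          by_contra pD
          exact pair hCD pC pD
        obtain ⟨P, hP1, hP2, hP3⟩ := triple_case V φ hφ hkA hkB hkD hAB
          (det_ne_zero_of_not_collinear hi2) x1 x2 y1 y2 huA huB huD heA heB heD pA pB pD
        exact ⟨P, Or.inr (Or.inl ⟨conv kA P A hkA hP1, conv kB P B hkB hP2, conv kD P D hkD hP3⟩)⟩
    · have pC : 1 < v (circ φ x1 x2 C) := by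
        by_contra pC
        exact pair hBC pB pC
      have pD : 1 < v (circ φ x1 x2 D) := by
        by_contra pD
        exact pair hBD pB pD
      obtain ⟨P, hP1, hP2, hP3⟩ := triple_case V φ hφ hkA hkC hkD hAC
        (det_ne_zero_of_not_collinear hi3) x1 x2 y1 y2 huA huC huD heA heC heD pA pC pD
      exact ⟨P, Or.inr (Or.inr (Or.inl ⟨conv kA P A hkA hP1, conv kC P C hkC hP2, conv kD P D hkD hP3⟩))⟩
  · have pB : 1 < v (circ φ x1 x2 B) := by
      by_contra pB
      exact pair hAB pA pB
    have pC : 1 < v (circ φ x1 x2 C) := by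
      by_contra pC
      exact pair hAC pA pC
    have pD : 1 < v (circ φ x1 x2 D) := by
      by_contra pD
      exact pair hAD pA pD
    obtain ⟨P, hP1, hP2, hP3⟩ := triple_case V φ hφ hkB hkC hkD hBC
      (det_ne_zero_of_not_collinear hi4) x1 x2 y1 y2 huB huC huD heB heC heD pB pC pD
    exact ⟨P, Or.inr (Or.inr (Or.inr ⟨conv kB P B hkB hP1, conv kC P C hkC hP2, conv kD P D hkD hP3⟩))⟩

end Endgame

section Pole

lemma exists_valuationSubring_pole {F : Type*} [Field F] [Algebra ℝ F] {f : F}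
    (hf : Transcendental ℝ f) :
    ∃ V : ValuationSubring F, (∀ r : ℝ, r ≠ 0 → V.valuation (algebraMap ℝ F r) = 1) ∧
      1 < V.valuation f := by
  have hf0 : f ≠ 0 := fun h => hf (h ▸ isAlgebraic_zero)
  set g : F := f⁻¹ with hg
  have hgt : Transcendental ℝ g := fun halg => hf (IsAlgebraic.inv_iff.mp halg)
  have haev : ∀ q : Polynomial ℝ, q ≠ 0 → (Polynomial.aeval g) q ≠ 0 :=
    fun q hq h0 => hgt ⟨q, hq, h0⟩
  set P : Ideal (Polynomial ℝ) := Ideal.span {Polynomial.X} with hP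
  haveI hPp : P.IsPrime := (Ideal.span_singleton_prime Polynomial.X_ne_zero).mpr Polynomial.prime_X
  set h : Polynomial ℝ →+* F := (Polynomial.aeval g).toRingHom with hh
  have hunits : ∀ y : P.primeCompl, IsUnit (h y) := by
    rintro ⟨y, hy⟩
    have hy0 : y ≠ 0 := by
      intro h0
      exact hy (by rw [h0]; exact Ideal.zero_mem P)
    exact isUnit_iff_ne_zero.mpr (haev y hy0)
  set lift : Localization.AtPrime P →+* F := IsLocalization.lift hunits with hlift
  obtain ⟨Vs, hmem, hloc⟩ := IsLocalRing.exists_factor_valuationRing lift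
  have hφV : ∀ r : ℝ, algebraMap ℝ F r = lift (algebraMap (Polynomial ℝ) (Localization.AtPrime P) (Polynomial.C r)) := by
    intro r
    rw [hlift, IsLocalization.lift_eq]
    simp [hh]
  have hφmem : ∀ r : ℝ, algebraMap ℝ F r ∈ Vs := by
    intro r
    rw [hφV r]
    exact hmem _
  refine ⟨Vs, ?_, ?_⟩
  · intro r hr
    have h1 : Vs.valuation (algebraMap ℝ F r) ≤ 1 :=
      (Vs.valuation_le_one_iff _).2 (hφmem r)
    have h2 : Vs.valuation (algebraMap ℝ F r⁻¹) ≤ 1 :=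
      (Vs.valuation_le_one_iff _).2 (hφmem r⁻¹)
    have h3 : algebraMap ℝ F r * algebraMap ℝ F r⁻¹ = 1 := by
      rw [← map_mul, mul_inv_cancel₀ hr, map_one]
    refine le_antisymm h1 ?_
    calc (1:_) = Vs.valuation (algebraMap ℝ F r * algebraMap ℝ F r⁻¹) := by rw [h3, map_one]
      _ = Vs.valuation (algebraMap ℝ F r) * Vs.valuation (algebraMap ℝ F r⁻¹) := by
          rw [Valuation.map_mul]
      _ ≤ Vs.valuation (algebraMap ℝ F r) * 1 := mul_le_mul_right h2 _
      _ = Vs.valuation (algebraMap ℝ F r) := mul_one _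
  · rw [← not_le]
    intro hle
    have hfV : f ∈ Vs := (Vs.valuation_le_one_iff f).1 hle
    set ξ := algebraMap (Polynomial ℝ) (Localization.AtPrime P) Polynomial.X with hξd
    have hξm : ξ ∈ IsLocalRing.maximalIdeal (Localization.AtPrime P) := by
      rw [hξd]
      rw [IsLocalization.AtPrime.to_map_mem_maximal_iff (Localization.AtPrime P) P]
      exact Ideal.subset_span rfl
    have hξnu : ¬ IsUnit ξ := (IsLocalRing.mem_maximalIdeal ξ).mp hξm
    apply hξnu
    apply hloc.map_nonunit
    have hcoe : (lift.codRestrict Vs.toSubring hmem ξ : F) = g := by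
      simp only [RingHom.codRestrict_apply]
      rw [hlift, IsLocalization.lift_eq]
      simp [hh]
    refine isUnit_iff_exists_inv.mpr ⟨⟨f, hfV⟩, ?_⟩
    apply Subtype.ext
    show ((lift.codRestrict Vs.toSubring hmem) ξ : F) * f = 1
    rw [hcoe]
    exact inv_mul_cancel₀ hf0

end Pole

section PrimeIdeal

open MvPolynomial

lemma exists_prime_vanishing {S' : Set (Fin 4 → ℝ)} (hS : S'.Infinite) :
    ∃ S0 : Set (Fin 4 → ℝ), S0 ⊆ S' ∧ S0.Infinite ∧
      (vanishingIdeal ℝ S0).IsPrime := by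
  set SS : Set (Ideal (MvPolynomial (Fin 4) ℝ)) :=
    {J | ∃ B : Set (Fin 4 → ℝ), B ⊆ S' ∧ B.Infinite ∧ J = vanishingIdeal ℝ B} with hSS
  have hne : SS.Nonempty := ⟨vanishingIdeal ℝ S', ⟨S', le_rfl, hS, rfl⟩⟩
  obtain ⟨J, hJSS, hJmax⟩ :=
    (set_has_maximal_iff_noetherian.mpr inferInstance) SS hne
  obtain ⟨B, hBS, hBinf, rfl⟩ := hJSS
  refine ⟨B, hBS, hBinf, ?_⟩
  constructor
  · -- not top
    intro htop
    obtain ⟨x, hx⟩ := hBinf.nonempty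
    have := (mem_vanishingIdeal_iff).mp (htop ▸ Submodule.mem_top : (1 : MvPolynomial (Fin 4) ℝ) ∈ vanishingIdeal ℝ B) x hx
    simp at this
  · intro f g hfg
    by_contra hc
    push_neg at hc
    obtain ⟨hf, hg⟩ := hc
    set Bf := {x ∈ B | eval x f = 0} with hBf
    set Bg := {x ∈ B | eval x g = 0} with hBg
    have hcover : B = Bf ∪ Bg := by
      apply Set.eq_of_subset_of_subset
      · intro x hx
        have := (mem_vanishingIdeal_iff).mp hfg x hx
        rw [map_mul] at this
        rcases mul_eq_zero.mp this with h0 | h0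
        · exact Or.inl ⟨hx, h0⟩
        · exact Or.inr ⟨hx, h0⟩
      · rintro x (⟨hx, _⟩ | ⟨hx, _⟩) <;> exact hx
    have hinf : Bf.Infinite ∨ Bg.Infinite := by
      by_contra hcc
      push_neg at hcc
      have : B.Finite := by
        rw [hcover]
        exact Set.Finite.union hcc.1 hcc.2
      exact hBinf this
    rcases hinf with hinf | hinf
    · have hmem : vanishingIdeal ℝ Bf ∈ SS := ⟨Bf, (Set.sep_subset _ _).trans hBS, hinf, rfl⟩
      have hle : vanishingIdeal ℝ B ≤ vanishingIdeal ℝ Bf :=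
        vanishingIdeal_anti_mono (Set.sep_subset _ _)
      have hlt : vanishingIdeal ℝ B < vanishingIdeal ℝ Bf := by
        apply lt_of_le_of_ne hle
        intro heq
        apply hf
        rw [heq]
        exact (mem_vanishingIdeal_iff).mpr (fun x hx => hx.2)
      exact hJmax _ hmem hlt
    · have hmem : vanishingIdeal ℝ Bg ∈ SS := ⟨Bg, (Set.sep_subset _ _).trans hBS, hinf, rfl⟩
      have hle : vanishingIdeal ℝ B ≤ vanishingIdeal ℝ Bg :=
        vanishingIdeal_anti_mono (Set.sep_subset _ _)
      have hlt : vanishingIdeal ℝ B < vanishingIdeal ℝ Bg := by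
        apply lt_of_le_of_ne hle
        intro heq
        apply hg
        rw [heq]
        exact (mem_vanishingIdeal_iff).mpr (fun x hx => hx.2)
      exact hJmax _ hmem hlt

end PrimeIdeal

section MainGlue

open MvPolynomial

/-- embedding of a pair of points into `Fin 4 → ℝ` -/
def emb (z : (ℝ × ℝ) × (ℝ × ℝ)) : Fin 4 → ℝ := ![z.1.1, z.1.2, z.2.1, z.2.2]

lemma emb_injective : Function.Injective emb := by
  intro a b h
  have h0 := congrFun h 0
  have h1 := congrFun h 1
  have h2 := congrFun h 2
  have h3 := congrFun h 3
  simp only [emb, Matrix.cons_val_zero, Matrix.cons_val_one, Matrix.head_cons,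
    Matrix.cons_val_two, Matrix.tail_cons, Matrix.cons_val_three, Matrix.head_fin_const] at h0 h1 h2 h3
  exact Prod.ext (Prod.ext h0 h1) (Prod.ext h2 h3)

/-- polynomial giving the squared distance of `X` to `T` -/
noncomputable def uPoly (T : ℝ × ℝ) : MvPolynomial (Fin 4) ℝ :=
  (X 0 - C T.1)^2 + (X 1 - C T.2)^2

/-- polynomial giving the squared distance of `Y` to `T` -/
noncomputable def wPoly (T : ℝ × ℝ) : MvPolynomial (Fin 4) ℝ :=
  (X 2 - C T.1)^2 + (X 3 - C T.2)^2

/-- the cleared-denominator equation polynomial -/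
noncomputable def gPoly (T : ℝ × ℝ) (k : ℝ) : MvPolynomial (Fin 4) ℝ :=
  uPoly T + wPoly T - C k * uPoly T * wPoly T

lemma eval_uPoly (z : (ℝ × ℝ) × (ℝ × ℝ)) (T : ℝ × ℝ) :
    eval (emb z) (uPoly T) = sq2 (z.1 - T) := by
  simp [uPoly, emb, sq2, Prod.fst_sub, Prod.snd_sub]

lemma eval_wPoly (z : (ℝ × ℝ) × (ℝ × ℝ)) (T : ℝ × ℝ) :
    eval (emb z) (wPoly T) = sq2 (z.2 - T) := by
  simp [wPoly, emb, sq2, Prod.fst_sub, Prod.snd_sub]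

lemma eval_gPoly (z : (ℝ × ℝ) × (ℝ × ℝ)) (T : ℝ × ℝ) (k : ℝ)
    (h1 : z.1 ≠ T) (h2 : z.2 ≠ T)
    (heq : 1 / sq2 (z.1 - T) + 1 / sq2 (z.2 - T) = k) :
    eval (emb z) (gPoly T k) = 0 := by
  have hu := sq2_ne_zero h1
  have hw := sq2_ne_zero h2
  simp only [gPoly, map_sub, map_add, map_mul, eval_C, eval_uPoly, eval_wPoly]
  field_simp at heq
  linarith [heq]

noncomputable def psiHom (p : Ideal (MvPolynomial (Fin 4) ℝ)) [p.IsPrime] :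
    MvPolynomial (Fin 4) ℝ →ₐ[ℝ] FractionRing (MvPolynomial (Fin 4) ℝ ⧸ p) :=
  (IsScalarTower.toAlgHom ℝ (MvPolynomial (Fin 4) ℝ ⧸ p) _).comp (Ideal.Quotient.mkₐ ℝ p)

lemma psiHom_zero_iff (p : Ideal (MvPolynomial (Fin 4) ℝ)) [p.IsPrime]
    (r : MvPolynomial (Fin 4) ℝ) : psiHom p r = 0 ↔ r ∈ p := by
  unfold psiHom
  rw [AlgHom.comp_apply]
  constructor
  · intro h
    have hinj := IsFractionRing.injective (MvPolynomial (Fin 4) ℝ ⧸ p)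
      (FractionRing (MvPolynomial (Fin 4) ℝ ⧸ p))
    have h2 : (Ideal.Quotient.mkₐ ℝ p) r = 0 := by
      apply hinj
      rw [map_zero]
      exact h
    rwa [Ideal.Quotient.mkₐ_eq_mk, Ideal.Quotient.eq_zero_iff_mem] at h2
  · intro h
    have h2 : (Ideal.Quotient.mkₐ ℝ p) r = 0 := by
      rw [Ideal.Quotient.mkₐ_eq_mk, Ideal.Quotient.eq_zero_iff_mem]
      exact h
    rw [h2, map_zero]

lemma psiHom_C (p : Ideal (MvPolynomial (Fin 4) ℝ)) [p.IsPrime] (a : ℝ) :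
    psiHom p (MvPolynomial.C a)
      = algebraMap ℝ (FractionRing (MvPolynomial (Fin 4) ℝ ⧸ p)) a := by
  rw [← MvPolynomial.algebraMap_eq]
  exact (psiHom p).commutes a

end MainGlue

end FMRS

open MvPolynomial in
theorem finitely_many_real_solutions
    (A B C D : ℝ × ℝ) (kA kB kC kD : ℝ)
    (hAB : A ≠ B) (hAC : A ≠ C) (hAD : A ≠ D)
    (hBC : B ≠ C) (hBD : B ≠ D) (hCD : C ≠ D)
    (hkA : kA ≠ 0) (hkB : kB ≠ 0) (hkC : kC ≠ 0) (hkD : kD ≠ 0)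
    -- Condition (i): no three of the points A, B, C, D are collinear
    (hi : ¬ Collinear ℝ ({A, B, C} : Set (ℝ × ℝ)) ∧
          ¬ Collinear ℝ ({A, B, D} : Set (ℝ × ℝ)) ∧
          ¬ Collinear ℝ ({A, C, D} : Set (ℝ × ℝ)) ∧
          ¬ Collinear ℝ ({B, C, D} : Set (ℝ × ℝ)))
    -- Condition (ii): no three of the four circles of center T and radius 1/√kT
    -- share a common point of ℝ²
    (hii : ¬ ∃ P : ℝ × ℝ,
      (kA * sq2 (P - A) = 1 ∧ kB * sq2 (P - B) = 1 ∧ kC * sq2 (P - C) = 1) ∨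
      (kA * sq2 (P - A) = 1 ∧ kB * sq2 (P - B) = 1 ∧ kD * sq2 (P - D) = 1) ∨
      (kA * sq2 (P - A) = 1 ∧ kC * sq2 (P - C) = 1 ∧ kD * sq2 (P - D) = 1) ∨
      (kB * sq2 (P - B) = 1 ∧ kC * sq2 (P - C) = 1 ∧ kD * sq2 (P - D) = 1)) :
    {XY : (ℝ × ℝ) × (ℝ × ℝ) |
      IsRealSol A B C D kA kB kC kD XY.1 XY.2}.Finite := by
  classical
  by_contra hfin
  apply hii
  have hinf : {XY : (ℝ × ℝ) × (ℝ × ℝ) |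
      IsRealSol A B C D kA kB kC kD XY.1 XY.2}.Infinite := hfin
  set Sol : Set ((ℝ × ℝ) × (ℝ × ℝ)) :=
    {XY | IsRealSol A B C D kA kB kC kD XY.1 XY.2} with hSol
  set S' : Set (Fin 4 → ℝ) := FMRS.emb '' Sol with hS'def
  have hS'inf : S'.Infinite := hinf.image FMRS.emb_injective.injOn
  -- the prime ideal
  obtain ⟨S0, hS0sub, hS0inf, hprime⟩ := FMRS.exists_prime_vanishing hS'inf
  set p : Ideal (MvPolynomial (Fin 4) ℝ) := vanishingIdeal ℝ S0 with hpdef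
  haveI : p.IsPrime := hprime
  -- the function field
  set Ψ : MvPolynomial (Fin 4) ℝ →ₐ[ℝ] FractionRing (MvPolynomial (Fin 4) ℝ ⧸ p) :=
    FMRS.psiHom p with hΨdef
  set φ : ℝ →+* FractionRing (MvPolynomial (Fin 4) ℝ ⧸ p) :=
    algebraMap ℝ (FractionRing (MvPolynomial (Fin 4) ℝ ⧸ p)) with hφdef
  set ζ : Fin 4 → FractionRing (MvPolynomial (Fin 4) ℝ ⧸ p) := fun j => Ψ (X j) with hζdef
  have hΨ0 : ∀ r ∈ p, Ψ r = 0 := fun r hr => (FMRS.psiHom_zero_iff p r).mpr hr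
  have hΨmem : ∀ r, Ψ r = 0 → r ∈ p := fun r hr => (FMRS.psiHom_zero_iff p r).mp hr
  have hΨC : ∀ a : ℝ, Ψ (MvPolynomial.C a) = φ a := fun a => FMRS.psiHom_C p a
  have hcu : ∀ T : ℝ × ℝ, Ψ (FMRS.uPoly T) = FMRS.circ φ (ζ 0) (ζ 1) T := by
    intro T
    simp only [FMRS.uPoly, FMRS.circ, map_add, map_sub, map_pow, hΨC, hζdef]
  have hcw : ∀ T : ℝ × ℝ, Ψ (FMRS.wPoly T) = FMRS.circ φ (ζ 2) (ζ 3) T := by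
    intro T
    simp only [FMRS.wPoly, FMRS.circ, map_add, map_sub, map_pow, hΨC, hζdef]
  -- the equations hold in F
  have hgmem : ∀ (T : ℝ × ℝ) (k : ℝ),
      (∀ z ∈ Sol, z.1 ≠ T ∧ z.2 ≠ T ∧ 1 / sq2 (z.1 - T) + 1 / sq2 (z.2 - T) = k) →
      FMRS.gPoly T k ∈ p := by
    intro T k hz
    rw [hpdef]
    apply (mem_vanishingIdeal_iff).mpr
    intro x hx
    obtain ⟨z, hzS, rfl⟩ := hS0sub hx
    obtain ⟨h1, h2, h3⟩ := hz z hzS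
    exact FMRS.eval_gPoly z T k h1 h2 h3
  have heqF : ∀ (T : ℝ × ℝ) (k : ℝ), FMRS.gPoly T k ∈ p →
      FMRS.circ φ (ζ 0) (ζ 1) T + FMRS.circ φ (ζ 2) (ζ 3) T
        = φ k * FMRS.circ φ (ζ 0) (ζ 1) T * FMRS.circ φ (ζ 2) (ζ 3) T := by
    intro T k hmem
    have h0 := hΨ0 _ hmem
    simp only [FMRS.gPoly, map_sub, map_add, map_mul, hΨC, hcu, hcw] at h0
    linear_combination h0
  have hune : ∀ T : ℝ × ℝ, (∀ z ∈ Sol, z.1 ≠ T) → FMRS.circ φ (ζ 0) (ζ 1) T ≠ 0 := by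
    intro T hz h0
    rw [← hcu] at h0
    have hup := hΨmem _ h0
    obtain ⟨x, hx⟩ := hS0inf.nonempty
    have := (mem_vanishingIdeal_iff).mp hup x hx
    change eval x (FMRS.uPoly T) = 0 at this
    obtain ⟨z, hzS, rfl⟩ := hS0sub hx
    rw [FMRS.eval_uPoly] at this
    exact FMRS.sq2_ne_zero (hz z hzS) this
  have hwne : ∀ T : ℝ × ℝ, (∀ z ∈ Sol, z.2 ≠ T) → FMRS.circ φ (ζ 2) (ζ 3) T ≠ 0 := by
    intro T hz h0
    rw [← hcw] at h0
    have hup := hΨmem _ h0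
    obtain ⟨x, hx⟩ := hS0inf.nonempty
    have := (mem_vanishingIdeal_iff).mp hup x hx
    change eval x (FMRS.wPoly T) = 0 at this
    obtain ⟨z, hzS, rfl⟩ := hS0sub hx
    rw [FMRS.eval_wPoly] at this
    exact FMRS.sq2_ne_zero (hz z hzS) this
  -- extract the hypotheses of IsRealSol
  have hSolA : ∀ z ∈ Sol, z.1 ≠ A ∧ z.2 ≠ A ∧ 1 / sq2 (z.1 - A) + 1 / sq2 (z.2 - A) = kA :=
    fun z hz => ⟨hz.1.1, hz.2.1.1, hz.2.2.1⟩
  have hSolB : ∀ z ∈ Sol, z.1 ≠ B ∧ z.2 ≠ B ∧ 1 / sq2 (z.1 - B) + 1 / sq2 (z.2 - B) = kB :=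
    fun z hz => ⟨hz.1.2.1, hz.2.1.2.1, hz.2.2.2.1⟩
  have hSolC : ∀ z ∈ Sol, z.1 ≠ C ∧ z.2 ≠ C ∧ 1 / sq2 (z.1 - C) + 1 / sq2 (z.2 - C) = kC :=
    fun z hz => ⟨hz.1.2.2.1, hz.2.1.2.2.1, hz.2.2.2.2.1⟩
  have hSolD : ∀ z ∈ Sol, z.1 ≠ D ∧ z.2 ≠ D ∧ 1 / sq2 (z.1 - D) + 1 / sq2 (z.2 - D) = kD :=
    fun z hz => ⟨hz.1.2.2.2, hz.2.1.2.2.2, hz.2.2.2.2.2⟩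
  have heA := heqF A kA (hgmem A kA hSolA)
  have heB := heqF B kB (hgmem B kB hSolB)
  have heC := heqF C kC (hgmem C kC hSolC)
  have heD := heqF D kD (hgmem D kD hSolD)
  have huA := hune A (fun z hz => (hSolA z hz).1)
  have huB := hune B (fun z hz => (hSolB z hz).1)
  have huC := hune C (fun z hz => (hSolC z hz).1)
  have huD := hune D (fun z hz => (hSolD z hz).1)
  have hwA := hwne A (fun z hz => (hSolA z hz).2.1)
  have hwB := hwne B (fun z hz => (hSolB z hz).2.1)
  have hwC := hwne C (fun z hz => (hSolC z hz).2.1)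
  have hwD := hwne D (fun z hz => (hSolD z hz).2.1)
  -- a transcendental coordinate
  have htr : ∃ j, Transcendental ℝ (ζ j) := by
    by_contra hc
    push_neg at hc
    have halg : ∀ j, IsAlgebraic ℝ (ζ j) := fun j => not_not.mp (hc j)
    choose q hq0 hqz using halg
    have hroot : ∀ x ∈ S0, ∀ j, Polynomial.eval (x j) (q j) = 0 := by
      intro x hx j
      have hQp : (Polynomial.aeval (X j : MvPolynomial (Fin 4) ℝ)) (q j) ∈ p := by
        apply hΨmem
        rw [← Polynomial.aeval_algHom_apply Ψ (X j) (q j)]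
        exact hqz j
      have hev := (mem_vanishingIdeal_iff).mp hQp x hx
      change eval x ((Polynomial.aeval (X j : MvPolynomial (Fin 4) ℝ)) (q j)) = 0 at hev
      have h0 : eval x ((Polynomial.aeval (X j : MvPolynomial (Fin 4) ℝ)) (q j))
          = MvPolynomial.aeval x ((Polynomial.aeval (X j : MvPolynomial (Fin 4) ℝ)) (q j)) := by
        rw [← coe_aeval_eq_eval]; rfl
      rw [h0, ← Polynomial.aeval_algHom_apply (MvPolynomial.aeval x)
        (X j : MvPolynomial (Fin 4) ℝ) (q j), aeval_X] at hev
      rw [← congrFun (Polynomial.coe_aeval_eq_eval (x j)) (q j)]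
      exact hev
    have hsub : S0 ⊆ Set.pi Set.univ (fun j => {t : ℝ | (q j).IsRoot t}) := by
      intro x hx j _
      exact hroot x hx j
    exact hS0inf (Set.Finite.subset
      (Set.Finite.pi (fun j => Polynomial.finite_setOf_isRoot (hq0 j))) hsub)
  obtain ⟨j, hj⟩ := htr
  obtain ⟨V, hφv, hpole⟩ := FMRS.exists_valuationSubring_pole hj
  -- four cases according to which coordinate has a pole
  have endg := FMRS.endgame V φ hφv A B C D kA kB kC kD hkA hkB hkC hkD
    hAB hAC hAD hBC hBD hCD hi.1 hi.2.1 hi.2.2.1 hi.2.2.2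
  have heA' : FMRS.circ φ (ζ 2) (ζ 3) A + FMRS.circ φ (ζ 0) (ζ 1) A
      = φ kA * FMRS.circ φ (ζ 2) (ζ 3) A * FMRS.circ φ (ζ 0) (ζ 1) A := by
    linear_combination heA
  have heB' : FMRS.circ φ (ζ 2) (ζ 3) B + FMRS.circ φ (ζ 0) (ζ 1) B
      = φ kB * FMRS.circ φ (ζ 2) (ζ 3) B * FMRS.circ φ (ζ 0) (ζ 1) B := by
    linear_combination heB
  have heC' : FMRS.circ φ (ζ 2) (ζ 3) C + FMRS.circ φ (ζ 0) (ζ 1) C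
      = φ kC * FMRS.circ φ (ζ 2) (ζ 3) C * FMRS.circ φ (ζ 0) (ζ 1) C := by
    linear_combination heC
  have heD' : FMRS.circ φ (ζ 2) (ζ 3) D + FMRS.circ φ (ζ 0) (ζ 1) D
      = φ kD * FMRS.circ φ (ζ 2) (ζ 3) D * FMRS.circ φ (ζ 0) (ζ 1) D := by
    linear_combination heD
  fin_cases j
  · exact endg (ζ 0) (ζ 1) (ζ 2) (ζ 3) huA huB huC huD heA heB heC heD
      (lt_of_lt_of_le hpole (le_max_left _ _))
  · exact endg (ζ 0) (ζ 1) (ζ 2) (ζ 3) huA huB huC huD heA heB heC heD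
      (lt_of_lt_of_le hpole (le_max_right _ _))
  · exact endg (ζ 2) (ζ 3) (ζ 0) (ζ 1) hwA hwB hwC hwD heA' heB' heC' heD'
      (lt_of_lt_of_le hpole (le_max_left _ _))
  · exact endg (ζ 2) (ζ 3) (ζ 0) (ζ 1) hwA hwB hwC hwD heA' heB' heC' heD'
      (lt_of_lt_of_le hpole (le_max_right _ _))
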